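/- Let S : A ⥤ C and T : B ⥤ C be functors, let J be a small category, suppose A and B admit limits of all J-shaped diagrams and both S and T preserve limits of J-shaped diagrams, and let D : J ⥤ S↓T be a diagram whose value at every object of J lies in the restricted comma subcategory (i.e., has invertible structure morphism). Then the limit of D in S↓T exists and its structure morphism S(lim P_A D) ⟶ T(lim P_B D) is an isomorphism; in particular, the restricted comma category (S↓T)_iso admits limits of J-shaped diagrams. -/

import Mathlib

open CategoryTheory CategoryTheory.Limits

theorem restrictedComma_limits_aux
    {A B C : Type*} [Category A] [Category B] [Category C]
    (S : A ⥤ C) (T : B ⥤ C) {J : Type*} [SmallCategory J]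
    [HasLimitsOfShape J A] [HasLimitsOfShape J B]
    [PreservesLimitsOfShape J S] [PreservesLimitsOfShape J T]
    (F : J ⥤ Comma S T) (hF : ∀ j : J, IsIso (F.obj j).hom)
    {c : Cone F} (hc : IsLimit c) : IsIso c.pt.hom := by
  let c₁ := limit.cone (F ⋙ Comma.fst S T)
  let t₂ := limit.isLimit (F ⋙ Comma.snd S T)
  let d := Comma.coneOfPreserves F c₁ t₂
  have hd : IsLimit d := Comma.coneOfPreservesIsLimit F (limit.isLimit _) t₂
  have hα : ∀ j, IsIso ((Functor.whiskerLeft F (Comma.natTrans S T)).app j) := fun j => hF j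
  have : IsIso (Functor.whiskerLeft F (Comma.natTrans S T)) := NatIso.isIso_of_isIso_app _
  have haux : IsLimit (Comma.limitAuxiliaryCone F c₁) :=
    (IsLimit.postcomposeHomEquiv (asIso (Functor.whiskerLeft F (Comma.natTrans S T))) _).symm
      (isLimitOfPreserves S (limit.isLimit _))
  have hdeq : d.pt.hom = (IsLimit.conePointUniqueUpToIso haux (isLimitOfPreserves T t₂)).hom :=
    rfl
  have hdpt : IsIso d.pt.hom := by rw [hdeq]; exact Iso.isIso_hom _
  let e := hc.conePointUniqueUpToIso hd
  have hL : IsIso e.hom.left := by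
    change IsIso ((Comma.fst S T).map e.hom); infer_instance
  have hR : IsIso e.hom.right := by
    change IsIso ((Comma.snd S T).map e.hom); infer_instance
  have hw : S.map e.hom.left ≫ d.pt.hom = c.pt.hom ≫ T.map e.hom.right := e.hom.w
  have : c.pt.hom = S.map e.hom.left ≫ d.pt.hom ≫ inv (T.map e.hom.right) := by
    rw [← Category.assoc, hw, Category.assoc, IsIso.hom_inv_id, Category.comp_id]
  rw [this]
  infer_instance

/-- Suppose `A` and `B` admit limits of `J`-shaped diagrams and both `S` and `T`
preserve such limits.  If `D : J ⥤ S↓T` is a diagram all of whose objects have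
invertible structure morphism (i.e. lie in the restricted comma category), then the
limit of `D` exists, its structure morphism is an isomorphism, and the restricted
comma category `(S↓T)_iso` admits limits of `J`-shaped diagrams. -/
theorem restrictedComma_limits
    {A B C : Type*} [Category A] [Category B] [Category C]
    (S : A ⥤ C) (T : B ⥤ C) (J : Type*) [SmallCategory J]
    [HasLimitsOfShape J A] [HasLimitsOfShape J B]
    [PreservesLimitsOfShape J S] [PreservesLimitsOfShape J T]
    (D : J ⥤ Comma S T) (hD : ∀ j : J, IsIso (D.obj j).hom) :
    HasLimit D ∧ IsIso (limit D).hom ∧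
      HasLimitsOfShape J
        (CategoryTheory.ObjectProperty.FullSubcategory (fun X : Comma S T => IsIso X.hom)) := by
  refine ⟨inferInstance, restrictedComma_limits_aux S T D hD (limit.isLimit D), ?_⟩
  haveI : ObjectProperty.IsClosedUnderLimitsOfShape (fun X : Comma S T => IsIso X.hom) J :=
    ⟨fun X ⟨h⟩ => restrictedComma_limits_aux S T h.diag h.prop_diag_obj h.isLimit⟩
  exact hasLimitsOfShape_of_closedUnderLimits J _
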